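/- Let P be a finite nonempty set of points in ℝ^d, and let c be the center and r the radius of its minimum enclosing ball. Then c lies in the convex hull of the set of points of P that are at distance exactly r from c. -/

import Mathlib

/-- `IsMEB P c r` says the closed ball of center `c` and radius `r` is the minimum enclosing
ball of `P`: it contains `P`, and any ball containing `P` has radius at least `r`. -/
def IsMEB {d : ℕ} (P : Set (EuclideanSpace ℝ (Fin d)))
    (c : EuclideanSpace ℝ (Fin d)) (r : ℝ) : Prop :=
  (∀ p ∈ P, dist p c ≤ r) ∧
    ∀ (c' : EuclideanSpace ℝ (Fin d)) (r' : ℝ), (∀ p ∈ P, dist p c' ≤ r') → r ≤ r'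

open RealInnerProductSpace

/-- the center of the minimum enclosing ball of a finite nonempty set `P` lies in
the convex hull of the points of `P` at distance exactly `r` from the center. -/
theorem meb_center_mem_convexHull_of_boundary {d : ℕ}
    (P : Set (EuclideanSpace ℝ (Fin d))) (hfin : P.Finite) (hne : P.Nonempty)
    (c : EuclideanSpace ℝ (Fin d)) (r : ℝ) (hmeb : IsMEB P c r) :
    c ∈ convexHull ℝ {p : EuclideanSpace ℝ (Fin d) | p ∈ P ∧ dist p c = r} := by
  by_contra hc
  let E := EuclideanSpace ℝ (Fin d)
  set B : Set E := {p : E | p ∈ P ∧ dist p c = r} with hB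
  have hBfin : B.Finite := hfin.subset (fun p hp => hp.1)
  have hclosed : IsClosed (convexHull ℝ B) := (hBfin.isCompact_convexHull (𝕜 := ℝ)).isClosed
  obtain ⟨f, u, hfc, hfb⟩ :=
    geometric_hahn_banach_point_closed (convex_convexHull ℝ B) hclosed hc
  set v : E := (InnerProductSpace.toDual ℝ E).symm f with hv
  have hvx : ∀ x : E, ⟪v, x⟫ = f x := fun x => InnerProductSpace.toDual_symm_apply
  set ε : ℝ := u - f c with hε
  have hεpos : 0 < ε := sub_pos.mpr hfc
  -- key dichotomy for each point of `P`
  have hPB : ∀ p ∈ P, dist p c < r ∨ (dist p c = r ∧ ε ≤ ⟪v, p - c⟫) := by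
    intro p hp
    rcases lt_or_eq_of_le (hmeb.1 p hp) with h | h
    · exact Or.inl h
    · refine Or.inr ⟨h, ?_⟩
      have hpB : p ∈ convexHull ℝ B := subset_convexHull ℝ B ⟨hp, h⟩
      have := hfb p hpB
      rw [inner_sub_right, hvx, hvx]
      linarith
  set F : Finset E := hfin.toFinset with hF
  have hFne : F.Nonempty := hfin.toFinset_nonempty.mpr hne
  have hmemF : ∀ p, p ∈ F ↔ p ∈ P := fun p => hfin.mem_toFinset
  set g : E → ℝ := fun p => if dist p c < r then (r - dist p c) / (2 * (‖v‖ + 1)) else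
      ε / (‖v‖ ^ 2 + 1) with hg
  have hnv : (0:ℝ) < ‖v‖ + 1 := by positivity
  have hnv2 : (0:ℝ) < ‖v‖ ^ 2 + 1 := by positivity
  set t : ℝ := F.inf' hFne g with ht
  have htpos : 0 < t := by
    rw [ht, Finset.lt_inf'_iff]
    intro p hp
    rw [hg]
    beta_reduce
    split
    · next h => exact div_pos (by linarith) (by linarith)
    · exact div_pos hεpos hnv2
  set c' : E := c + t • v with hc'
  have hdcc' : dist c c' = t * ‖v‖ := by
    rw [hc', dist_eq_norm]
    simp [norm_smul, abs_of_pos htpos]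
  have hkey : ∀ p ∈ F, dist p c' < r := by
    intro p hpF
    have hp : p ∈ P := (hmemF p).mp hpF
    have htle : t ≤ g p := Finset.inf'_le g hpF
    rcases hPB p hp with h | ⟨h, hinner⟩
    · -- interior point: small move keeps it inside
      have hgp : g p = (r - dist p c) / (2 * (‖v‖ + 1)) := by rw [hg]; simp [h]
      have htri : dist p c' ≤ dist p c + dist c c' := dist_triangle p c c'
      rw [hdcc'] at htri
      rw [hgp] at htle
      have hvnn : (0:ℝ) ≤ ‖v‖ := norm_nonneg v
      have h1 : t * ‖v‖ ≤ (r - dist p c) / (2 * (‖v‖ + 1)) * ‖v‖ :=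
        mul_le_mul_of_nonneg_right htle hvnn
      have h2 : (r - dist p c) / (2 * (‖v‖ + 1)) * ‖v‖ < r - dist p c := by
        rw [div_mul_eq_mul_div, div_lt_iff₀ (by linarith)]
        nlinarith
      linarith
    · -- boundary point: inner product bound shrinks the distance
      have hgp : g p = ε / (‖v‖ ^ 2 + 1) := by rw [hg]; simp [h]
      rw [hgp] at htle
      have hr0 : 0 ≤ r := le_trans dist_nonneg (hmeb.1 p hp)
      have hsub : p - c' = (p - c) - t • v := by rw [hc']; abel
      have hnorm : dist p c' ^ 2 =
          ‖p - c‖ ^ 2 - 2 * (t * ⟪p - c, v⟫) + t ^ 2 * ‖v‖ ^ 2 := by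
        rw [dist_eq_norm, hsub, @norm_sub_sq_real, real_inner_smul_right, norm_smul,
          Real.norm_eq_abs, abs_of_pos htpos]
        ring
      have hic : ⟪p - c, v⟫ = ⟪v, p - c⟫ := real_inner_comm _ _
      have hpc : ‖p - c‖ = r := by rw [← dist_eq_norm]; exact h
      have hsq : dist p c' ^ 2 < r ^ 2 := by
        rw [hnorm, hic, hpc]
        have hb : t * ‖v‖ ^ 2 ≤ ε := by
          have h2 := (le_div_iff₀ hnv2).mp htle
          nlinarith
        nlinarith
      exact lt_of_pow_lt_pow_left₀ 2 hr0 hsq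
  set r' : ℝ := F.sup' hFne (fun p => dist p c') with hr'
  have hr'lt : r' < r := by
    rw [hr', Finset.sup'_lt_iff]
    exact hkey
  have : r ≤ r' := hmeb.2 c' r' (fun p hp => Finset.le_sup' (fun q => dist q c') ((hmemF p).mpr hp))
  linarith
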